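/- If (U, S, C) is a complete Mammen space, then the topology S is not second countable. -/

import Mathlib

open Set Topology TopologicalSpace

/-- A topology is perfect if every nonempty open set is infinite. -/
def IsPerfectTop {U : Type*} (T : TopologicalSpace U) : Prop :=
  ∀ V : Set U, IsOpen[T] V → V.Nonempty → V.Infinite

/-- A perfect topology is maximal if no strictly finer topology is perfect. -/
def IsMaxPerfectTop {U : Type*} (T : TopologicalSpace U) : Prop :=
  IsPerfectTop T ∧ ∀ T' : TopologicalSpace U, T' ≤ T → IsPerfectTop T' → T' = T

/-- `(U, T, C)` is a Mammen space. -/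
structure IsMammen {U : Type*} (T : TopologicalSpace U) (C : Set (Set U)) : Prop where
  nonemptyU : Nonempty U
  perfect : IsPerfectTop T
  hausdorff : @T2Space U T
  exNonempty : ∃ c ∈ C, c.Nonempty
  unionMem : ∀ c ∈ C, ∀ d ∈ C, c ∪ d ∈ C
  interMem : ∀ c ∈ C, ∀ d ∈ C, c ∩ d ∈ C
  singletonMem : ∀ c ∈ C, c.Nonempty → ∃ x ∈ c, ({x} : Set U) ∈ C
  emptyMem : ∅ ∈ C
  openInterC : ∀ s ∈ C, IsOpen[T] s → s = ∅
  interOpenMem : ∀ c ∈ C, ∀ s : Set U, IsOpen[T] s → c ∩ s ∈ C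

/-- A Mammen space is complete if every subset is the union of an open set
and a choice category. -/
def MammenComplete {U : Type*} (T : TopologicalSpace U) (C : Set (Set U)) : Prop :=
  ∀ X : Set U, ∃ s c, IsOpen[T] s ∧ c ∈ C ∧ X = s ∪ c



open Classical in
noncomputable def pick2 {U : Type*} [Nonempty U] (s : Set U) : U × U :=
  if h : s.Infinite then
    (h.nonempty.choose, ((h.diff (Set.finite_singleton h.nonempty.choose)).nonempty).choose)
  else (Classical.arbitrary U, Classical.arbitrary U)

lemma pick2_spec {U : Type*} [Nonempty U] {s : Set U} (h : s.Infinite) :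
    (pick2 s).1 ∈ s ∧ (pick2 s).2 ∈ s ∧ (pick2 s).1 ≠ (pick2 s).2 := by
  have h2 := ((h.diff (Set.finite_singleton h.nonempty.choose)).nonempty).choose_spec
  simp only [pick2, dif_pos h]
  exact ⟨h.nonempty.choose_spec, h2.1, Ne.symm (by simpa using h2.2)⟩

noncomputable def stSet {U : Type*} [Nonempty U] (f : ℕ → Set U) : ℕ → Set U
  | 0 => ∅
  | n+1 => stSet f n ∪ {(pick2 (f n \ stSet f n)).1, (pick2 (f n \ stSet f n)).2}

lemma stSet_finite {U : Type*} [Nonempty U] (f : ℕ → Set U) (n : ℕ) :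
    (stSet f n).Finite := by
  induction n with
  | zero => simp [stSet]
  | succ n ih => exact ih.union (by simp)

lemma stSet_mono {U : Type*} [Nonempty U] (f : ℕ → Set U) {m n : ℕ} (h : m ≤ n) :
    stSet f m ⊆ stSet f n := by
  induction n with
  | zero => simp_all
  | succ n ih =>
    rcases Nat.lt_or_ge m (n+1) with h' | h'
    · exact (ih (Nat.lt_succ_iff.mp h')).trans (subset_union_left)
    · have : m = n + 1 := le_antisymm h h'
      subst this; rfl

lemma exists_disjoint_dense {U : Type*} [T : TopologicalSpace U] [Nonempty U]
    (hperf : IsPerfectTop T) [SecondCountableTopology U] :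
    ∃ A B : Set U, Dense A ∧ Dense B ∧ A ∩ B = ∅ := by
  obtain ⟨b, hbc, hbne, hbasis⟩ := exists_countable_basis U
  have hbnonempty : b.Nonempty := by
    obtain ⟨x⟩ := ‹Nonempty U›
    have : x ∈ ⋃₀ b := hbasis.sUnion_eq ▸ mem_univ x
    obtain ⟨t, ht, _⟩ := this
    exact ⟨t, ht⟩
  obtain ⟨f, hf⟩ := Set.Countable.exists_eq_range hbc hbnonempty
  have hfb : ∀ n, f n ∈ b := fun n => hf ▸ mem_range_self n
  have hinf : ∀ n, (f n).Infinite := fun n =>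
    hperf (f n) (hbasis.isOpen (hfb n))
      (nonempty_iff_ne_empty.mpr (fun he => hbne (he ▸ hfb n)))
  have hdiffinf : ∀ n, (f n \ stSet f n).Infinite :=
    fun n => (hinf n).diff (stSet_finite f n)
  set g : ℕ → U × U := fun n => pick2 (f n \ stSet f n) with hg
  have hspec : ∀ n, (g n).1 ∈ f n \ stSet f n ∧ (g n).2 ∈ f n \ stSet f n ∧
      (g n).1 ≠ (g n).2 := fun n => pick2_spec (hdiffinf n)
  have hmem_succ : ∀ n, (g n).1 ∈ stSet f (n+1) ∧ (g n).2 ∈ stSet f (n+1) := by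
    intro n
    constructor <;> (show _ ∈ stSet f n ∪ _ ; right ; simp [hg])
  refine ⟨range (fun n => (g n).1), range (fun n => (g n).2), ?_, ?_, ?_⟩
  · rw [dense_iff_inter_open]
    intro V hV ⟨x, hx⟩
    obtain ⟨t, htb, hxt, htV⟩ := hbasis.exists_subset_of_mem_open hx hV
    obtain ⟨n, hn⟩ := (hf ▸ htb : t ∈ range f)
    exact ⟨(g n).1, htV (hn ▸ (hspec n).1.1), mem_range_self n⟩
  · rw [dense_iff_inter_open]
    intro V hV ⟨x, hx⟩
    obtain ⟨t, htb, hxt, htV⟩ := hbasis.exists_subset_of_mem_open hx hV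
    obtain ⟨n, hn⟩ := (hf ▸ htb : t ∈ range f)
    exact ⟨(g n).2, htV (hn ▸ (hspec n).2.1.1), mem_range_self n⟩
  · ext x
    simp only [mem_inter_iff, mem_range, mem_empty_iff_false, iff_false]
    rintro ⟨⟨n, hn⟩, ⟨m, hm⟩⟩
    rcases lt_trichotomy n m with hlt | heq | hgt
    · exact (hspec m).2.1.2 (hm ▸ hn ▸ stSet_mono f hlt (hmem_succ n).1)
    · exact (hspec n).2.2 (heq ▸ (hn.trans hm.symm))
    · exact (hspec n).1.2 (hn ▸ hm ▸ stSet_mono f hgt (hmem_succ m).2)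

theorem stmt7 {U : Type*} (T : TopologicalSpace U) (C : Set (Set U))
    (h : IsMammen T C) (hcomp : MammenComplete T C) :
    ¬ @SecondCountableTopology U T := by
  intro hsc
  letI := T
  haveI := hsc
  haveI := h.nonemptyU
  obtain ⟨A, B, hA, hB, hAB⟩ := exists_disjoint_dense h.perfect
  have hC : ∀ X : Set U, interior X = ∅ → X ∈ C := by
    intro X hX
    obtain ⟨s, c, hs, hcC, hXsc⟩ := hcomp X
    have hsub : s ⊆ interior X := interior_maximal (hXsc ▸ subset_union_left) hs
    have hse : s = ∅ := subset_empty_iff.mp (hX ▸ hsub)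
    rw [hXsc, hse, empty_union]; exact hcC
  have hAc : Aᶜ ∈ C := hC _ (by rw [interior_compl, hA.closure_eq, compl_univ])
  have hBc : Bᶜ ∈ C := hC _ (by rw [interior_compl, hB.closure_eq, compl_univ])
  have huniv : (univ : Set U) ∈ C := by
    have he : Aᶜ ∪ Bᶜ = univ := by rw [← compl_inter, hAB, compl_empty]
    exact he ▸ h.unionMem _ hAc _ hBc
  exact (univ_nonempty).ne_empty (h.openInterC _ huniv isOpen_univ)
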